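/- Let δ ∈ (0, 1/2). Then the quantity I := sup over t₁ ≥ 0 and t ∈ [0,t₁] of ∫₀ᵗ (1+t)^{1+δ}/(1+|t−s|)^{1+δ} · [ (1+s)^{−1−δ} ∫ₛ^{t₁} (1+τ)^{−2−2δ} dτ + (1+s)^{−2−2δ} ] ds is finite. -/

import Mathlib

open intervalIntegral Real Set

lemma rpow_eval (p a b : ℝ) (hp : p ≠ -1) (ha : 0 < 1 + a) (hb : 0 < 1 + b) :
    ∫ τ in a..b, (1 + τ) ^ p = ((1 + b) ^ (p + 1) - (1 + a) ^ (p + 1)) / (p + 1) := by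
  have h := intervalIntegral.integral_comp_add_left (a := a) (b := b) (fun u => u ^ p) 1
  rw [h, integral_rpow]
  right
  refine ⟨hp, ?_⟩
  intro hmem
  rcases Set.mem_uIcc.1 hmem with ⟨h1, _⟩ | ⟨h1, _⟩ <;> linarith

theorem stmt_2 (δ : ℝ) (hδ : 0 < δ) (hδ' : δ < 1/2) :
    ∃ I : ℝ, ∀ t₁ : ℝ, 0 ≤ t₁ → ∀ t ∈ Set.Icc (0:ℝ) t₁,
      (∫ s in (0:ℝ)..t,
          (1 + t) ^ (1 + δ) / (1 + |t - s|) ^ (1 + δ) *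
            ((1 + s) ^ (-1 - δ) * (∫ τ in s..t₁, (1 + τ) ^ (-2 - 2*δ))
              + (1 + s) ^ (-2 - 2*δ)))
        ≤ I := by
  refine ⟨2 / δ, fun t₁ ht₁ t ht => ?_⟩
  obtain ⟨ht0, htt₁⟩ := ht
  have huIcc : Set.uIcc (0:ℝ) t = Set.Icc 0 t := Set.uIcc_of_le ht0
  -- replace inner integral with explicit formula
  have hp : (-2 - 2*δ : ℝ) ≠ -1 := by linarith
  set F : ℝ → ℝ := fun s =>
    (1 + t) ^ (1 + δ) / (1 + |t - s|) ^ (1 + δ) *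
      ((1 + s) ^ (-1 - δ) *
        (((1 + t₁) ^ (-2 - 2*δ + 1) - (1 + s) ^ (-2 - 2*δ + 1)) / (-2 - 2*δ + 1))
        + (1 + s) ^ (-2 - 2*δ)) with hF
  have hEq : Set.EqOn (fun s =>
      (1 + t) ^ (1 + δ) / (1 + |t - s|) ^ (1 + δ) *
        ((1 + s) ^ (-1 - δ) * (∫ τ in s..t₁, (1 + τ) ^ (-2 - 2*δ))
          + (1 + s) ^ (-2 - 2*δ))) F (Set.uIcc 0 t) := by
    intro s hs
    rw [huIcc] at hs
    have hs0 : (0:ℝ) ≤ s := hs.1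
    simp only [hF]
    rw [rpow_eval _ _ _ hp (by linarith) (by linarith)]
  rw [intervalIntegral.integral_congr hEq]
  -- continuity pieces
  have hc1 : ∀ p : ℝ, ContinuousOn (fun s : ℝ => (1 + s) ^ p) (Set.Icc 0 t) := by
    intro p
    exact (continuousOn_const.add continuousOn_id).rpow_const
      (fun x hx => Or.inl (by have := hx.1; exact ne_of_gt (by show (0:ℝ) < 1 + x; linarith)))
  have hc2 : Continuous (fun s : ℝ => (1 + |t - s|) ^ (1 + δ)) := by
    exact ((continuous_const.add (continuous_const.sub continuous_id).abs).rpow_const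
      (fun x => Or.inr (by positivity)))
  have hFc : ContinuousOn F (Set.Icc 0 t) := by
    apply ContinuousOn.mul
    · exact continuousOn_const.div hc2.continuousOn (fun x hx => by positivity)
    · exact ((hc1 _).mul ((continuousOn_const.sub (hc1 _)).div_const _)).add (hc1 _)
  have hFint : IntervalIntegrable F MeasureTheory.volume 0 t :=
    (hFc.mono (by rw [huIcc])).intervalIntegrable
  have hGc : ContinuousOn (fun s : ℝ => 2 * (1 + s) ^ (-1 - δ)) (Set.Icc 0 t) :=
    continuousOn_const.mul (hc1 _)
  have hGint : IntervalIntegrable (fun s : ℝ => 2 * (1 + s) ^ (-1 - δ))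
      MeasureTheory.volume 0 t := (hGc.mono (by rw [huIcc])).intervalIntegrable
  -- pointwise bound
  have hpt : ∀ s ∈ Set.Icc (0:ℝ) t, F s ≤ 2 * (1 + s) ^ (-1 - δ) := by
    intro s hs
    obtain ⟨hs0, hst⟩ := hs
    have h1s : (0:ℝ) < 1 + s := by linarith
    have h1ts : (0:ℝ) < 1 + (t - s) := by linarith
    have h1t₁ : (0:ℝ) < 1 + t₁ := by linarith
    have hA : (1 + t) ^ (1 + δ) / (1 + |t - s|) ^ (1 + δ) ≤ (1 + s) ^ (1 + δ) := by
      rw [abs_of_nonneg (by linarith : (0:ℝ) ≤ t - s)]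
      rw [div_le_iff₀ (by positivity)]
      rw [← Real.mul_rpow h1s.le h1ts.le]
      apply Real.rpow_le_rpow (by linarith) (by nlinarith) (by linarith)
    have hJ : ((1 + t₁) ^ (-2 - 2*δ + 1) - (1 + s) ^ (-2 - 2*δ + 1)) / (-2 - 2*δ + 1)
        ≤ (1 + s) ^ (-1 - δ) := by
      have h1 : ((1 + t₁) ^ (-2 - 2*δ + 1) - (1 + s) ^ (-2 - 2*δ + 1)) / (-2 - 2*δ + 1)
          = ((1 + s) ^ (-1 - 2*δ) - (1 + t₁) ^ (-1 - 2*δ)) / (1 + 2*δ) := by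
        rw [show (-2 - 2*δ + 1 : ℝ) = -1 - 2*δ by ring]
        rw [div_eq_div_iff (by linarith) (by linarith)]
        ring
      rw [h1]
      have h2 : ((1 + s) ^ (-1 - 2*δ) - (1 + t₁) ^ (-1 - 2*δ)) / (1 + 2*δ)
          ≤ (1 + s) ^ (-1 - 2*δ) := by
        rw [div_le_iff₀ (by linarith)]
        have hpos : (0:ℝ) ≤ (1 + t₁) ^ (-1 - 2*δ) := by positivity
        have hpos2 : (0:ℝ) ≤ (1 + s) ^ (-1 - 2*δ) := by positivity
        nlinarith
      refine h2.trans ?_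
      exact Real.rpow_le_rpow_of_exponent_le (by linarith) (by linarith)
    have hBnn : (0:ℝ) ≤ (1 + s) ^ (-1 - δ) := by positivity
    have hB : (1 + s) ^ (-1 - δ) *
          (((1 + t₁) ^ (-2 - 2*δ + 1) - (1 + s) ^ (-2 - 2*δ + 1)) / (-2 - 2*δ + 1))
          + (1 + s) ^ (-2 - 2*δ) ≤ 2 * (1 + s) ^ (-2 - 2*δ) := by
      have : (1 + s) ^ (-1 - δ) * (1 + s) ^ (-1 - δ) = (1 + s) ^ (-2 - 2*δ) := by
        rw [← Real.rpow_add h1s]; ring_nf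
      nlinarith [mul_le_mul_of_nonneg_left hJ hBnn]
    have hBnn2 : (0:ℝ) ≤ (1 + s) ^ (-1 - δ) *
          (((1 + t₁) ^ (-2 - 2*δ + 1) - (1 + s) ^ (-2 - 2*δ + 1)) / (-2 - 2*δ + 1))
          + (1 + s) ^ (-2 - 2*δ) := by
      have hJ0 : 0 ≤ ((1 + t₁) ^ (-2 - 2*δ + 1) - (1 + s) ^ (-2 - 2*δ + 1)) / (-2 - 2*δ + 1) := by
        rw [div_nonneg_iff]
        right
        constructor
        · have : (1 + t₁) ^ (-2 - 2*δ + 1) ≤ (1 + s) ^ (-2 - 2*δ + 1) :=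
            Real.rpow_le_rpow_of_nonpos h1s (by linarith) (by linarith)
          linarith
        · linarith
      positivity
    have hAnn : (0:ℝ) ≤ (1 + t) ^ (1 + δ) / (1 + |t - s|) ^ (1 + δ) := by positivity
    have hmul : (1 + s) ^ (1 + δ) * (1 + s) ^ (-2 - 2*δ) = (1 + s) ^ (-1 - δ) := by
      rw [← Real.rpow_add h1s]; congr 1; ring
    calc F s ≤ (1 + s) ^ (1 + δ) * (2 * (1 + s) ^ (-2 - 2*δ)) :=
          mul_le_mul hA hB hBnn2 (by positivity)
      _ = 2 * ((1 + s) ^ (1 + δ) * (1 + s) ^ (-2 - 2*δ)) := by ring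
      _ = 2 * (1 + s) ^ (-1 - δ) := by rw [hmul]
  have hmono := intervalIntegral.integral_mono_on ht0 hFint hGint hpt
  refine hmono.trans ?_
  rw [intervalIntegral.integral_const_mul, rpow_eval _ _ _ (by linarith) (by linarith) (by linarith)]
  have h1 : (1:ℝ) + 0 = 1 := by ring
  have hδ0 : δ ≠ 0 := ne_of_gt hδ
  have hkey : ((1 + t) ^ (-1 - δ + 1) - (1 + 0) ^ (-1 - δ + 1)) / (-1 - δ + 1) ≤ 1 / δ := by
    rw [h1, Real.one_rpow, show (-1 - δ + 1 : ℝ) = -δ by ring]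
    have heq : ((1 + t) ^ (-δ) - 1) / (-δ) = (1 - (1 + t) ^ (-δ)) / δ := by
      rw [div_eq_div_iff (by simpa using hδ0 : (-δ:ℝ) ≠ 0) hδ0]; ring
    rw [heq, div_le_div_iff₀ hδ hδ]
    have : (0:ℝ) ≤ (1 + t) ^ (-δ) := by positivity
    nlinarith
  rw [show (2:ℝ)/δ = 2 * (1/δ) by ring]
  linarith [hkey]
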